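/- Fix a real number β with β + 2k + 1 ≠ 0 for all integers k ≥ 1, and an integer n ≥ 1. For ε ∈ ℝ, ε ≠ 0, set q = −e^{ε}, b = −e^{βε}. Then, as ε → 0 (ε ≠ 0), both (q²;q)_{2n}/(bq³;q)_{2n} and (q²;q)_{2n−1}/(bq³;q)_{2n−1} tend to the same limit n! / ∏_{k=0}^{n−1} ((β+3)/2 + k) (the denominators (bq³;q)_m being nonzero for all sufficiently small ε ≠ 0). -/

import Mathlib

open Filter Real Finset

/-- The q-shifted factorial `(a;q)_n = ∏_{k=0}^{n-1} (1 - a q^k)`. -/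
noncomputable def qPoch (q a : ℝ) (n : ℕ) : ℝ :=
  ∏ k ∈ Finset.range n, (1 - a * q ^ k)

private lemma slope_lim (a : ℝ) :
    Tendsto (fun ε : ℝ => (1 - Real.exp (a*ε))/ε) (nhdsWithin 0 ({0}ᶜ : Set ℝ)) (nhds (-a)) := by
  have h1 : HasDerivAt (fun ε : ℝ => a * ε) a 0 := by simpa using (hasDerivAt_id (0:ℝ)).const_mul a
  have h2 : HasDerivAt (fun ε : ℝ => 1 - Real.exp (a*ε)) (-a) 0 := by
    simpa [Pi.sub_def] using (hasDerivAt_const (0:ℝ) (1:ℝ)).sub h1.exp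
  rw [hasDerivAt_iff_tendsto_slope] at h2
  refine h2.congr (fun ε => ?_)
  simp [slope_def_field, div_eq_div_iff]

private lemma even_lim (a c : ℝ) (hc : c ≠ 0) :
    Tendsto (fun ε : ℝ => (1 - Real.exp (a*ε))/(1 - Real.exp (c*ε)))
      (nhdsWithin 0 ({0}ᶜ : Set ℝ)) (nhds (a/c)) := by
  have h := (slope_lim a).div (slope_lim c) (neg_ne_zero.2 hc)
  have he : a / c = (-a) / (-c) := (neg_div_neg_eq a c).symm
  rw [he]
  refine h.congr' ?_
  filter_upwards [self_mem_nhdsWithin] with ε (hε : ε ≠ 0)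
  simp only [Pi.div_apply]
  rw [div_div_div_cancel_right₀ hε]

/-- The limit of the `k`-th factor of the ratio. -/
noncomputable def Lfac (β : ℝ) (k : ℕ) : ℝ := if Even k then ((k:ℝ)+2)/(β+3+k) else 1

private lemma num_term (ε : ℝ) (k : ℕ) :
    1 - (-Real.exp ε)^2 * (-Real.exp ε)^k = 1 - (-1:ℝ)^k * Real.exp (((k:ℝ)+2)*ε) := by
  rw [neg_pow, neg_pow]
  have : Real.exp ε ^ 2 * Real.exp ε ^ k = Real.exp (((k:ℝ)+2)*ε) := by
    rw [← Real.exp_nat_mul, ← Real.exp_nat_mul, ← Real.exp_add]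
    ring_nf
  rw [← this]
  ring

private lemma den_term (β ε : ℝ) (k : ℕ) :
    1 - (-Real.exp (β*ε) * (-Real.exp ε)^3) * (-Real.exp ε)^k
      = 1 - (-1:ℝ)^k * Real.exp ((β+3+(k:ℝ))*ε) := by
  rw [neg_pow, neg_pow]
  have : Real.exp (β*ε) * (Real.exp ε ^ 3 * Real.exp ε ^ k) = Real.exp ((β+3+(k:ℝ))*ε) := by
    rw [← Real.exp_nat_mul, ← Real.exp_nat_mul, ← Real.exp_add, ← Real.exp_add]
    ring_nf
  rw [← this]
  ring

private lemma hc_ne (β : ℝ) (hβ : ∀ k : ℕ, 1 ≤ k → β + 2 * k + 1 ≠ 0) {k : ℕ}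
    (hk : Even k) : β + 3 + (k:ℝ) ≠ 0 := by
  obtain ⟨j, rfl⟩ := hk
  have := hβ (j+1) (Nat.le_add_left 1 j)
  push_cast at this ⊢
  intro h; apply this; linarith

private lemma den_term_ne (β : ℝ) (hβ : ∀ k : ℕ, 1 ≤ k → β + 2 * k + 1 ≠ 0)
    {ε : ℝ} (hε : ε ≠ 0) (k : ℕ) :
    1 - (-Real.exp (β*ε) * (-Real.exp ε)^3) * (-Real.exp ε)^k ≠ 0 := by
  rw [den_term]
  rcases Nat.even_or_odd k with he | ho
  · rw [he.neg_one_pow, one_mul, sub_ne_zero]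
    intro h
    have : (β + 3 + (k:ℝ)) * ε = 0 := by
      have hh : Real.exp ((β + 3 + (k:ℝ)) * ε) = Real.exp 0 := by rw [Real.exp_zero]; exact h.symm
      exact Real.exp_eq_exp.mp hh
    rcases mul_eq_zero.mp this with h' | h'
    · exact hc_ne β hβ he h'
    · exact hε h'
  · rw [ho.neg_one_pow]
    have := Real.exp_pos ((β + 3 + (k:ℝ)) * ε)
    nlinarith

private lemma factor_lim (β : ℝ) (hβ : ∀ k : ℕ, 1 ≤ k → β + 2 * k + 1 ≠ 0) (k : ℕ) :
    Tendsto (fun ε : ℝ =>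
        (1 - (-Real.exp ε)^2 * (-Real.exp ε)^k) /
          (1 - (-Real.exp (β*ε) * (-Real.exp ε)^3) * (-Real.exp ε)^k))
      (nhdsWithin 0 ({0}ᶜ : Set ℝ)) (nhds (Lfac β k)) := by
  simp only [num_term, den_term]
  rcases Nat.even_or_odd k with he | ho
  · rw [Lfac, if_pos he]
    simpa [he.neg_one_pow] using even_lim ((k:ℝ)+2) (β+3+(k:ℝ)) (hc_ne β hβ he)
  · rw [Lfac, if_neg (Nat.not_even_iff_odd.mpr ho)]
    simp only [ho.neg_one_pow, neg_one_mul, sub_neg_eq_add]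
    have hnum : Tendsto (fun ε : ℝ => 1 + Real.exp (((k:ℝ)+2)*ε)) (nhds 0) (nhds 2) := by
      have h : Continuous fun ε : ℝ => 1 + Real.exp (((k:ℝ)+2)*ε) := by continuity
      simpa [one_add_one_eq_two] using h.tendsto 0
    have hden : Tendsto (fun ε : ℝ => 1 + Real.exp ((β+3+(k:ℝ))*ε)) (nhds 0) (nhds 2) := by
      have h : Continuous fun ε : ℝ => 1 + Real.exp ((β+3+(k:ℝ))*ε) := by continuity
      simpa [one_add_one_eq_two] using h.tendsto 0
    have := (hnum.div hden two_ne_zero).mono_left (nhdsWithin_le_nhds (s := ({0}ᶜ : Set ℝ)))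
    simpa [Pi.div_def] using this

private lemma ratio_lim (β : ℝ) (hβ : ∀ k : ℕ, 1 ≤ k → β + 2 * k + 1 ≠ 0) (m : ℕ) :
    Tendsto (fun ε : ℝ =>
        qPoch (-Real.exp ε) ((-Real.exp ε) ^ 2) m /
          qPoch (-Real.exp ε) (-Real.exp (β * ε) * (-Real.exp ε) ^ 3) m)
      (nhdsWithin 0 ({0}ᶜ : Set ℝ)) (nhds (∏ k ∈ Finset.range m, Lfac β k)) := by
  have heq : ∀ ε : ℝ,
      qPoch (-Real.exp ε) ((-Real.exp ε) ^ 2) m /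
          qPoch (-Real.exp ε) (-Real.exp (β * ε) * (-Real.exp ε) ^ 3) m
        = ∏ k ∈ Finset.range m,
            ((1 - (-Real.exp ε)^2 * (-Real.exp ε)^k) /
              (1 - (-Real.exp (β*ε) * (-Real.exp ε)^3) * (-Real.exp ε)^k)) := by
    intro ε
    rw [qPoch, qPoch, ← Finset.prod_div_distrib]
  simp only [heq]
  exact tendsto_finset_prod _ (fun k _ => factor_lim β hβ k)

private lemma prod_L (β : ℝ) (hβ : ∀ k : ℕ, 1 ≤ k → β + 2 * k + 1 ≠ 0) (n : ℕ) :
    ∏ k ∈ Finset.range (2*n), Lfac β k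
      = (n.factorial : ℝ) / ∏ k ∈ Finset.range n, ((β + 3) / 2 + k) := by
  induction n with
  | zero => simp
  | succ m ih =>
    have heven : Even (2*m) := even_two_mul m
    have hodd : ¬ Even (2*m+1) := by simp [Nat.even_add_one, heven]
    have hL1 : Lfac β (2*m) = (((2*m : ℕ):ℝ)+2)/(β+3+((2*m:ℕ):ℝ)) := by rw [Lfac, if_pos heven]
    have hL2 : Lfac β (2*m+1) = 1 := by rw [Lfac, if_neg hodd]
    rw [show 2*(m+1) = 2*m+1+1 by ring, prod_range_succ, prod_range_succ, ih,
      hL1, hL2, prod_range_succ, Nat.factorial_succ]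
    have h1 : β + 3 + ((2*m : ℕ):ℝ) ≠ 0 := hc_ne β hβ heven
    have h2 : (β+3)/2 + (m:ℝ) ≠ 0 := by
      intro h; apply h1; push_cast; linarith
    have h3 : (∏ k ∈ Finset.range m, ((β + 3) / 2 + (k:ℝ))) ≠ 0 := by
      refine Finset.prod_ne_zero_iff.mpr (fun k hk => ?_)
      have hk' : Even (2*k) := even_two_mul k
      have := hc_ne β hβ hk'
      intro h; apply this; push_cast; linarith
    push_cast at h1 ⊢
    field_simp

theorem moments_limit (β : ℝ) (hβ : ∀ k : ℕ, 1 ≤ k → β + 2 * k + 1 ≠ 0)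
    (n : ℕ) (hn : 1 ≤ n) :
    (∀ᶠ ε : ℝ in nhdsWithin 0 ({0}ᶜ : Set ℝ),
        qPoch (-Real.exp ε) (-Real.exp (β * ε) * (-Real.exp ε) ^ 3) (2 * n) ≠ 0 ∧
        qPoch (-Real.exp ε) (-Real.exp (β * ε) * (-Real.exp ε) ^ 3) (2 * n - 1) ≠ 0) ∧
    Filter.Tendsto
      (fun ε : ℝ =>
        qPoch (-Real.exp ε) ((-Real.exp ε) ^ 2) (2 * n) /
          qPoch (-Real.exp ε) (-Real.exp (β * ε) * (-Real.exp ε) ^ 3) (2 * n))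
      (nhdsWithin 0 ({0}ᶜ : Set ℝ))
      (nhds ((n.factorial : ℝ) / ∏ k ∈ Finset.range n, ((β + 3) / 2 + k))) ∧
    Filter.Tendsto
      (fun ε : ℝ =>
        qPoch (-Real.exp ε) ((-Real.exp ε) ^ 2) (2 * n - 1) /
          qPoch (-Real.exp ε) (-Real.exp (β * ε) * (-Real.exp ε) ^ 3) (2 * n - 1))
      (nhdsWithin 0 ({0}ᶜ : Set ℝ))
      (nhds ((n.factorial : ℝ) / ∏ k ∈ Finset.range n, ((β + 3) / 2 + k))) := by
  obtain ⟨m, rfl⟩ : ∃ m, n = m + 1 := ⟨n - 1, (Nat.succ_pred_eq_of_pos hn).symm⟩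
  have hsub : 2 * (m+1) - 1 = 2*m+1 := by omega
  have hprod_odd : ∏ k ∈ Finset.range (2*(m+1) - 1), Lfac β k
      = ∏ k ∈ Finset.range (2*(m+1)), Lfac β k := by
    have hodd : ¬ Even (2*m+1) := by simp [Nat.even_add_one, even_two_mul m]
    have hL2 : Lfac β (2*m+1) = 1 := by rw [Lfac, if_neg hodd]
    have h4 : ∏ k ∈ Finset.range (2*m+1+1), Lfac β k = ∏ k ∈ Finset.range (2*m+1), Lfac β k := by
      rw [prod_range_succ, hL2, mul_one]
    rw [hsub, show 2*(m+1) = 2*m+1+1 by ring]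
    exact h4.symm
  refine ⟨?_, ?_, ?_⟩
  · filter_upwards [self_mem_nhdsWithin] with ε (hε : ε ≠ 0)
    constructor <;>
      exact Finset.prod_ne_zero_iff.mpr (fun k _ => den_term_ne β hβ hε k)
  · have := ratio_lim β hβ (2*(m+1))
    rwa [prod_L β hβ (m+1)] at this
  · have := ratio_lim β hβ (2*(m+1) - 1)
    rwa [hprod_odd, prod_L β hβ (m+1)] at this
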